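/- Let A ∈ ℝ^{n×N}, let x ∈ ℝ^N and e ∈ ℝ^n with b = Ax + e, let x^♯ be a best s-term approximation of x supported on T^♯, and set ẽ = A(x − x^♯) + e. Let δ_s and δ_{2s} be RIP constants for A of orders s and 2s with δ_{2s} < 1. Let w ∈ ℝ^N satisfy Aw = b, let T_k ⊆ {1,…,N} with |T_k| = s and A_{T_k}* A_{T_k} invertible, and define u by u_{T_k} = w_{T_k} + (A_{T_k}* A_{T_k})^{-1} A_{T_k}* A_{T_k^c} w_{T_k^c} and u = 0 off T_k. Then, with T = T^♯ ∪ T_k, ‖u − x^♯‖₂ ≤ (1/(1−δ_{2s})) ‖x^♯_{T \ T_k}‖₂ + (√(1+δ_s)/(1−δ_{2s})) ‖ẽ‖₂. -/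

import Mathlib

open Matrix Finset Filter Topology

/-- Euclidean norm of a vector. -/
noncomputable def euclNorm {k : ℕ} (x : Fin k → ℝ) : ℝ := Real.sqrt (∑ i, x i ^ 2)

/-- `x` has at most `s` nonzero entries. -/
def IsSparse {k : ℕ} (s : ℕ) (x : Fin k → ℝ) : Prop :=
  (Finset.univ.filter fun i => x i ≠ 0).card ≤ s

/-- Spectral norm (ℓ²-operator norm) of a matrix. -/
noncomputable def specNorm {m k : Type*} [Fintype m] [Fintype k] [DecidableEq k]
    (M : Matrix m k ℝ) : ℝ :=
  ‖LinearMap.toContinuousLinearMap (Matrix.toEuclideanLin M)‖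

/-- `cols A T` is the submatrix of `A` consisting of the columns indexed by `T`. -/
def cols {n N : ℕ} (A : Matrix (Fin n) (Fin N) ℝ) (T : Finset (Fin N)) :
    Matrix (Fin n) {i : Fin N // i ∈ T} ℝ := Matrix.of fun r c => A r c.1

/-- `subv x T` is the subvector of `x` consisting of the entries indexed by `T`. -/
def subv {N : ℕ} (x : Fin N → ℝ) (T : Finset (Fin N)) : {i : Fin N // i ∈ T} → ℝ :=
  fun i => x i.1

/-- The feedback term `(A_T* A_T)⁻¹ A_T* A_{Tᶜ} x_{Tᶜ}`. -/
noncomputable def fb {n N : ℕ} (A : Matrix (Fin n) (Fin N) ℝ) (T : Finset (Fin N))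
    (x : Fin N → ℝ) : {i : Fin N // i ∈ T} → ℝ :=
  ((cols A T)ᵀ * cols A T)⁻¹ *ᵥ ((cols A T)ᵀ *ᵥ (cols A Tᶜ *ᵥ subv x Tᶜ))

lemma enorm_nonneg' {k : ℕ} (x : Fin k → ℝ) : 0 ≤ euclNorm x := Real.sqrt_nonneg _

lemma enorm_sq' {k : ℕ} (x : Fin k → ℝ) : euclNorm x ^ 2 = ∑ i, x i ^ 2 :=
  Real.sq_sqrt (Finset.sum_nonneg fun i _ => sq_nonneg _)

lemma cs' {k : ℕ} (f g : Fin k → ℝ) : ∑ i, f i * g i ≤ euclNorm f * euclNorm g :=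
  Real.sum_mul_le_sqrt_mul_sqrt _ f g

lemma split_mulVec {n N : ℕ} (A : Matrix (Fin n) (Fin N) ℝ) (T : Finset (Fin N))
    (y : Fin N → ℝ) :
    cols A T *ᵥ subv y T + cols A Tᶜ *ᵥ subv y Tᶜ = A *ᵥ y := by
  funext r
  show (∑ c : {i : Fin N // i ∈ T}, A r c.1 * y c.1)
      + (∑ c : {i : Fin N // i ∈ Tᶜ}, A r c.1 * y c.1) = ∑ c, A r c * y c
  rw [Finset.sum_coe_sort T (fun c => A r c * y c),
    Finset.sum_coe_sort Tᶜ (fun c => A r c * y c)]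
  exact Finset.sum_add_sum_compl T _

lemma cross0 {n N s : ℕ} (A : Matrix (Fin n) (Fin N) ℝ) (δ₂ : ℝ)
    (hRIP2 : ∀ z : Fin N → ℝ, IsSparse (2*s) z →
      (1 - δ₂) * euclNorm z ^ 2 ≤ euclNorm (A *ᵥ z) ^ 2 ∧
        euclNorm (A *ᵥ z) ^ 2 ≤ (1 + δ₂) * euclNorm z ^ 2)
    (p q : Fin N → ℝ) (hd : ∀ i, p i * q i = 0) (hsp : IsSparse (2*s) (p + q)) :
    ∑ r, (A *ᵥ p) r * (A *ᵥ q) r ≤ δ₂ * ((∑ i, p i ^ 2) + (∑ i, q i ^ 2)) / 2 := by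
  have hsp' : IsSparse (2*s) (p - q) := by
    refine le_trans (Finset.card_le_card ?_) hsp
    intro i hi
    simp only [Finset.mem_filter, Finset.mem_univ, true_and, Pi.sub_apply, Pi.add_apply] at hi ⊢
    rcases mul_eq_zero.mp (hd i) with h | h <;> intro hc <;> rw [h] at hi hc <;>
      simp_all
  have h1 := (hRIP2 (p + q) hsp).2
  have h2 := (hRIP2 (p - q) hsp').1
  rw [enorm_sq', enorm_sq', Matrix.mulVec_add] at h1
  rw [enorm_sq', enorm_sq', Matrix.mulVec_sub] at h2
  have hS : ∀ (c : ℝ), ∑ i, (p i + c * q i) ^ 2 = (∑ i, p i ^ 2) + c^2 * ∑ i, q i ^ 2 := by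
    intro c
    rw [Finset.mul_sum, ← Finset.sum_add_distrib]
    refine Finset.sum_congr rfl fun i _ => ?_
    linear_combination (2*c) * hd i
  have hSp : ∑ i, (p + q) i ^ 2 = (∑ i, p i ^ 2) + (∑ i, q i ^ 2) := by
    simpa using hS 1
  have hSm : ∑ i, (p - q) i ^ 2 = (∑ i, p i ^ 2) + (∑ i, q i ^ 2) := by
    have := hS (-1); simpa [sub_eq_add_neg] using this
  rw [hSp] at h1; rw [hSm] at h2
  have hpol : ∑ r, ((A *ᵥ p) r + (A *ᵥ q) r) ^ 2 - ∑ r, ((A *ᵥ p) r - (A *ᵥ q) r) ^ 2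
      = 4 * ∑ r, (A *ᵥ p) r * (A *ᵥ q) r := by
    rw [← Finset.sum_sub_distrib, Finset.mul_sum]
    exact Finset.sum_congr rfl fun r _ => by ring
  have e1 : ∑ r, ((A *ᵥ p) + (A *ᵥ q)) r ^ 2 = ∑ r, ((A *ᵥ p) r + (A *ᵥ q) r) ^ 2 := rfl
  have e2 : ∑ r, ((A *ᵥ p) - (A *ᵥ q)) r ^ 2 = ∑ r, ((A *ᵥ p) r - (A *ᵥ q) r) ^ 2 := rfl
  rw [e1] at h1; rw [e2] at h2
  linarith

lemma cross {n N s : ℕ} (A : Matrix (Fin n) (Fin N) ℝ) (δ₂ : ℝ) (hδ₂0 : 0 ≤ δ₂)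
    (hRIP2 : ∀ z : Fin N → ℝ, IsSparse (2*s) z →
      (1 - δ₂) * euclNorm z ^ 2 ≤ euclNorm (A *ᵥ z) ^ 2 ∧
        euclNorm (A *ᵥ z) ^ 2 ≤ (1 + δ₂) * euclNorm z ^ 2)
    (p q : Fin N → ℝ) (hd : ∀ i, p i * q i = 0) (hsp : IsSparse (2*s) (p + q)) :
    ∑ r, (A *ᵥ p) r * (A *ᵥ q) r ≤ δ₂ * euclNorm p * euclNorm q := by
  by_cases hp : p = 0
  · subst hp
    simp only [Matrix.mulVec_zero, Pi.zero_apply, zero_mul, Finset.sum_const_zero]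
    exact mul_nonneg (mul_nonneg hδ₂0 (enorm_nonneg' _)) (enorm_nonneg' _)
  by_cases hq : q = 0
  · subst hq
    simp only [Matrix.mulVec_zero, Pi.zero_apply, mul_zero, Finset.sum_const_zero]
    exact mul_nonneg (mul_nonneg hδ₂0 (enorm_nonneg' _)) (enorm_nonneg' _)
  have hpp : 0 < euclNorm p := by
    rw [euclNorm]
    apply Real.sqrt_pos.mpr
    obtain ⟨i, hi⟩ := Function.ne_iff.mp hp
    exact Finset.sum_pos' (fun j _ => sq_nonneg _)
      ⟨i, Finset.mem_univ i, lt_of_le_of_ne (sq_nonneg _) (Ne.symm (pow_ne_zero 2 hi))⟩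
  have hqq : 0 < euclNorm q := by
    rw [euclNorm]
    apply Real.sqrt_pos.mpr
    obtain ⟨i, hi⟩ := Function.ne_iff.mp hq
    exact Finset.sum_pos' (fun j _ => sq_nonneg _)
      ⟨i, Finset.mem_univ i, lt_of_le_of_ne (sq_nonneg _) (Ne.symm (pow_ne_zero 2 hi))⟩
  set t : ℝ := Real.sqrt (euclNorm q / euclNorm p) with ht
  have htpos : 0 < t := Real.sqrt_pos.mpr (by positivity)
  have ht2 : t ^ 2 = euclNorm q / euclNorm p := Real.sq_sqrt (by positivity)
  set p' : Fin N → ℝ := fun i => t * p i with hp'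
  set q' : Fin N → ℝ := fun i => t⁻¹ * q i with hq'
  have hd' : ∀ i, p' i * q' i = 0 := fun i => by
    simp only [hp', hq']
    linear_combination (t * t⁻¹) * hd i
  have hsp2 : IsSparse (2*s) (p' + q') := by
    refine le_trans (Finset.card_le_card ?_) hsp
    intro i hi
    simp only [Finset.mem_filter, Finset.mem_univ, true_and, Pi.add_apply, hp', hq'] at hi ⊢
    intro hc
    apply hi
    rcases mul_eq_zero.mp (hd i) with h | h
    · have h2 : q i = 0 := by rw [h] at hc; linarith
      rw [h, h2]; ring
    · have h2 : p i = 0 := by rw [h] at hc; linarith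
      rw [h, h2]; ring
  have h0 := cross0 A δ₂ hRIP2 p' q' hd' hsp2
  have hAp' : A *ᵥ p' = fun r => t * (A *ᵥ p) r := by
    funext r
    simp only [Matrix.mulVec, dotProduct, hp', Finset.mul_sum]
    exact Finset.sum_congr rfl fun c _ => by ring
  have hAq' : A *ᵥ q' = fun r => t⁻¹ * (A *ᵥ q) r := by
    funext r
    simp only [Matrix.mulVec, dotProduct, hq', Finset.mul_sum]
    exact Finset.sum_congr rfl fun c _ => by ring
  have hL : ∑ r, (A *ᵥ p') r * (A *ᵥ q') r = ∑ r, (A *ᵥ p) r * (A *ᵥ q) r := by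
    rw [hAp', hAq']
    refine Finset.sum_congr rfl fun r _ => ?_
    have htne : t ≠ 0 := ne_of_gt htpos
    field_simp
    try ring
  have hsp2' : ∑ i, p' i ^ 2 = t ^ 2 * ∑ i, p i ^ 2 := by
    rw [Finset.mul_sum]; exact Finset.sum_congr rfl fun i _ => by simp [hp']; ring
  have hsq2' : ∑ i, q' i ^ 2 = (t⁻¹) ^ 2 * ∑ i, q i ^ 2 := by
    rw [Finset.mul_sum]; exact Finset.sum_congr rfl fun i _ => by simp [hq']; ring
  rw [hL, hsp2', hsq2'] at h0
  have hep : ∑ i, p i ^ 2 = euclNorm p ^ 2 := (enorm_sq' p).symm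
  have heq : ∑ i, q i ^ 2 = euclNorm q ^ 2 := (enorm_sq' q).symm
  rw [hep, heq, ht2] at h0
  have hti : (t⁻¹) ^ 2 = euclNorm p / euclNorm q := by
    rw [inv_pow, ht2]; field_simp
  rw [hti] at h0
  have : euclNorm q / euclNorm p * euclNorm p ^ 2 = euclNorm p * euclNorm q := by field_simp
  have h2 : euclNorm p / euclNorm q * euclNorm q ^ 2 = euclNorm p * euclNorm q := by field_simp
  rw [this, h2] at h0
  calc ∑ r, (A *ᵥ p) r * (A *ᵥ q) r ≤ δ₂ * (euclNorm p * euclNorm q + euclNorm p * euclNorm q) / 2 := h0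
    _ = δ₂ * euclNorm p * euclNorm q := by ring

/-- single-step NST+HT+FB estimate
`‖u − x♯‖₂ ≤ ‖x♯_{T∖T_k}‖₂/(1−δ_{2s}) + √(1+δ_s)‖ẽ‖₂/(1−δ_{2s})` with `T = T♯ ∪ T_k`. -/
theorem stmt_18 {n N s : ℕ} (hnN : n < N) (A : Matrix (Fin n) (Fin N) ℝ)
    (x : Fin N → ℝ) (e b : Fin n → ℝ) (hb : b = A *ᵥ x + e)
    (xs : Fin N → ℝ) (hxs : IsSparse s xs)
    (hbest : ∀ z : Fin N → ℝ, IsSparse s z → euclNorm (xs - x) ≤ euclNorm (z - x))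
    (Ts : Finset (Fin N)) (hsupp : ∀ i ∉ Ts, xs i = 0)
    (et : Fin n → ℝ) (het : et = A *ᵥ (x - xs) + e)
    (δ₁ δ₂ : ℝ) (hδ₁0 : 0 ≤ δ₁) (hδ₂0 : 0 ≤ δ₂) (hδ₂1 : δ₂ < 1)
    (hRIP1 : ∀ z : Fin N → ℝ, IsSparse s z →
      (1 - δ₁) * euclNorm z ^ 2 ≤ euclNorm (A *ᵥ z) ^ 2 ∧
        euclNorm (A *ᵥ z) ^ 2 ≤ (1 + δ₁) * euclNorm z ^ 2)
    (hRIP2 : ∀ z : Fin N → ℝ, IsSparse (2*s) z →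
      (1 - δ₂) * euclNorm z ^ 2 ≤ euclNorm (A *ᵥ z) ^ 2 ∧
        euclNorm (A *ᵥ z) ^ 2 ≤ (1 + δ₂) * euclNorm z ^ 2)
    (w : Fin N → ℝ) (hw : A *ᵥ w = b)
    (Tk : Finset (Fin N)) (hTk : Tk.card = s)
    (hgram : IsUnit ((cols A Tk)ᵀ * cols A Tk))
    (u : Fin N → ℝ)
    (hu1 : ∀ i, ∀ hi : i ∈ Tk, u i = w i + fb A Tk w ⟨i, hi⟩)
    (hu2 : ∀ i ∉ Tk, u i = 0) :
    euclNorm (u - xs) ≤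
      (1 / (1 - δ₂)) * euclNorm (fun i => if i ∈ (Ts ∪ Tk) \ Tk then xs i else 0) +
        (Real.sqrt (1 + δ₁) / (1 - δ₂)) * euclNorm et := by
  have h1δ : (0:ℝ) < 1 - δ₂ := by linarith
  set h : Fin N → ℝ := u - xs with hh
  set g : Fin N → ℝ := fun i => if i ∈ Tk then h i else 0 with hg
  set z : Fin N → ℝ := fun i => if i ∈ Tk then 0 else h i with hz
  have hzi : ∀ i ∉ Tk, z i = -xs i := by
    intro i hi
    simp only [hz, if_neg hi, hh, Pi.sub_apply, hu2 i hi, zero_sub]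
  have hzxs : ∀ i, z i ≠ 0 → xs i ≠ 0 := by
    intro i hzi0
    by_cases hi : i ∈ Tk
    · exfalso; apply hzi0; simp [hz, hi]
    · intro hx; apply hzi0; rw [hzi i hi, hx, neg_zero]
  -- Step A : orthogonality
  have hGdet : IsUnit ((cols A Tk)ᵀ * cols A Tk).det :=
    (Matrix.isUnit_iff_isUnit_det _).mp hgram
  have hGinv : ((cols A Tk)ᵀ * cols A Tk) * ((cols A Tk)ᵀ * cols A Tk)⁻¹ = 1 :=
    Matrix.mul_nonsing_inv _ hGdet
  have hu_sub : subv u Tk = subv w Tk + fb A Tk w := funext fun i => hu1 i.1 i.2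
  have hzero : subv u Tkᶜ = 0 := funext fun i => hu2 i.1 (Finset.mem_compl.mp i.2)
  have hA_u : A *ᵥ u = cols A Tk *ᵥ subv u Tk := by
    rw [← split_mulVec A Tk u, hzero, Matrix.mulVec_zero, add_zero]
  have e1 : (cols A Tk)ᵀ *ᵥ (A *ᵥ u) = (cols A Tk)ᵀ *ᵥ (A *ᵥ w) := by
    rw [hA_u, Matrix.mulVec_mulVec, hu_sub, Matrix.mulVec_add]
    simp only [fb]
    rw [Matrix.mulVec_mulVec, hGinv, Matrix.one_mulVec,
      ← split_mulVec A Tk w, Matrix.mulVec_add]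
    simp only [Matrix.mulVec_mulVec]
  have hAwb : A *ᵥ w = A *ᵥ xs + et := by
    rw [hw, hb, het, Matrix.mulVec_sub]; abel
  have keyv : (cols A Tk)ᵀ *ᵥ (A *ᵥ h - et) = 0 := by
    have hrw : A *ᵥ h - et = A *ᵥ u - A *ᵥ w := by
      rw [hh, Matrix.mulVec_sub, hAwb]; abel
    rw [hrw, Matrix.mulVec_sub, e1, sub_self]
  have key2 : ∀ c ∈ Tk, ∑ r, A r c * ((A *ᵥ h) r - et r) = 0 := by
    intro c hc
    have := congrFun keyv ⟨c, hc⟩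
    simpa [Matrix.mulVec, dotProduct, cols, Matrix.transpose_apply, Pi.sub_apply] using this
  have key3 : ∑ r, (A *ᵥ g) r * ((A *ᵥ h) r - et r) = 0 := by
    have hgr : ∀ r, (A *ᵥ g) r = ∑ c ∈ Tk, A r c * h c := by
      intro r
      show ∑ c, A r c * g c = _
      rw [← Finset.sum_subset (Finset.subset_univ Tk)
        (fun i _ hi => by simp [hg, if_neg hi])]
      exact Finset.sum_congr rfl fun c hc => by simp [hg, if_pos hc]
    calc ∑ r, (A *ᵥ g) r * ((A *ᵥ h) r - et r)
        = ∑ r, ∑ c ∈ Tk, A r c * h c * ((A *ᵥ h) r - et r) := by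
          refine Finset.sum_congr rfl fun r _ => ?_
          rw [hgr r, Finset.sum_mul]
      _ = ∑ c ∈ Tk, ∑ r, A r c * h c * ((A *ᵥ h) r - et r) := Finset.sum_comm
      _ = ∑ c ∈ Tk, h c * ∑ r, A r c * ((A *ᵥ h) r - et r) := by
          refine Finset.sum_congr rfl fun c _ => ?_
          rw [Finset.mul_sum]
          exact Finset.sum_congr rfl fun r _ => by ring
      _ = 0 := Finset.sum_eq_zero fun c hc => by rw [key2 c hc, mul_zero]
  -- sparsity facts
  have hgS : IsSparse s g := by
    refine le_trans (Finset.card_le_card fun i hi => ?_) hTk.le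
    simp only [Finset.mem_filter, Finset.mem_univ, true_and, hg] at hi
    by_contra hn; exact hi (if_neg hn)
  have hg2S : IsSparse (2*s) g := le_trans hgS (by omega)
  have hsub2s : ∀ v : Fin N → ℝ, (∀ i, v i ≠ 0 → i ∈ Tk ∨ xs i ≠ 0) →
      IsSparse (2*s) v := by
    intro v hv
    refine le_trans (Finset.card_le_card fun i hi =>
      (?_ : i ∈ Tk ∪ Finset.univ.filter fun j => xs j ≠ 0))
      (le_trans (Finset.card_union_le _ _) ?_)
    · simp only [Finset.mem_filter, Finset.mem_univ, true_and] at hi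
      rcases hv i hi with hcase | hcase
      · exact Finset.mem_union_left _ hcase
      · exact Finset.mem_union_right _ (by simp [hcase])
    · rw [two_mul]
      exact add_le_add hTk.le hxs
  set mz : Fin N → ℝ := fun i => -(z i) with hmz
  have hdisj : ∀ i, g i * mz i = 0 := by
    intro i
    by_cases hi : i ∈ Tk <;> simp [hg, hz, hmz, hi]
  have hmzsp : IsSparse (2*s) (g + mz) := by
    refine hsub2s _ fun i hi => ?_
    by_cases hik : i ∈ Tk
    · exact Or.inl hik
    · refine Or.inr (hzxs i fun hz0 => hi ?_)
      simp [Pi.add_apply, hg, hmz, if_neg hik, hz0]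
  have hcross := cross A δ₂ hδ₂0 hRIP2 g mz hdisj hmzsp
  have hemz : euclNorm mz = euclNorm z := by
    simp only [euclNorm, hmz, neg_sq]
  have hAmz : A *ᵥ mz = fun r => -((A *ᵥ z) r) := by
    funext r
    show ∑ c, A r c * mz c = _
    rw [show -((A *ᵥ z) r) = -∑ c, A r c * z c from rfl, ← Finset.sum_neg_distrib]
    exact Finset.sum_congr rfl fun c _ => by simp [hmz]
  -- main identity
  have hgzh : h = g + z := by
    funext i
    by_cases hi : i ∈ Tk <;> simp [hg, hz, hi]
  have hAh : A *ᵥ h = A *ᵥ g + A *ᵥ z := by rw [hgzh, Matrix.mulVec_add]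
  have key4 : ∑ r, (A *ᵥ g) r * (A *ᵥ h) r = ∑ r, (A *ᵥ g) r * et r := by
    have hsplit : ∑ r, ((A *ᵥ g) r * (A *ᵥ h) r - (A *ᵥ g) r * et r) = 0 := by
      rw [← key3]; exact Finset.sum_congr rfl fun r _ => by ring
    rw [Finset.sum_sub_distrib] at hsplit
    linarith
  have key5 : ∑ r, (A *ᵥ g) r ^ 2
      = ∑ r, (A *ᵥ g) r * et r + ∑ r, (A *ᵥ g) r * (A *ᵥ mz) r := by
    have hexp : ∑ r, (A *ᵥ g) r * (A *ᵥ h) r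
        = ∑ r, (A *ᵥ g) r ^ 2 + ∑ r, (A *ᵥ g) r * (A *ᵥ z) r := by
      rw [hAh, ← Finset.sum_add_distrib]
      exact Finset.sum_congr rfl fun r _ => by simp [Pi.add_apply]; ring
    have hneg : ∑ r, (A *ᵥ g) r * (A *ᵥ mz) r = -∑ r, (A *ᵥ g) r * (A *ᵥ z) r := by
      rw [hAmz, ← Finset.sum_neg_distrib]
      exact Finset.sum_congr rfl fun r _ => by ring
    rw [hneg]
    linarith [key4, hexp]
  -- Cauchy-Schwarz and RIP1
  have hcs : ∑ r, (A *ᵥ g) r * et r ≤ euclNorm (A *ᵥ g) * euclNorm et := cs' _ _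
  have hAgle : euclNorm (A *ᵥ g) ≤ Real.sqrt (1 + δ₁) * euclNorm g := by
    have h1 : euclNorm (A *ᵥ g) = Real.sqrt (euclNorm (A *ᵥ g) ^ 2) :=
      (Real.sqrt_sq (enorm_nonneg' _)).symm
    rw [h1]
    calc Real.sqrt (euclNorm (A *ᵥ g) ^ 2)
        ≤ Real.sqrt ((1 + δ₁) * euclNorm g ^ 2) := Real.sqrt_le_sqrt (hRIP1 g hgS).2
      _ = Real.sqrt (1 + δ₁) * euclNorm g := by
          rw [Real.sqrt_mul (by linarith), Real.sqrt_sq (enorm_nonneg' _)]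
  have hlow : (1 - δ₂) * euclNorm g ^ 2 ≤ ∑ r, (A *ᵥ g) r ^ 2 :=
    le_of_le_of_eq (hRIP2 g hg2S).1 (enorm_sq' _)
  have hkey : (1 - δ₂) * euclNorm g ≤ δ₂ * euclNorm z + Real.sqrt (1 + δ₁) * euclNorm et := by
    rcases (enorm_nonneg' g).eq_or_lt with h0 | h0
    · rw [← h0, mul_zero]
      exact add_nonneg (mul_nonneg hδ₂0 (enorm_nonneg' _))
        (mul_nonneg (Real.sqrt_nonneg _) (enorm_nonneg' _))
    · have hb2 : ((1 - δ₂) * euclNorm g) * euclNorm g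
          ≤ (δ₂ * euclNorm z + Real.sqrt (1 + δ₁) * euclNorm et) * euclNorm g := by
        have hc1 : ∑ r, (A *ᵥ g) r * et r ≤ Real.sqrt (1 + δ₁) * euclNorm g * euclNorm et :=
          hcs.trans (mul_le_mul_of_nonneg_right hAgle (enorm_nonneg' et))
        have hc2 : ∑ r, (A *ᵥ g) r * (A *ᵥ mz) r ≤ δ₂ * euclNorm g * euclNorm z := by
          rw [← hemz]; exact hcross
        nlinarith [hlow, key5]
      exact le_of_mul_le_mul_right hb2 h0
  -- ‖h‖ ≤ ‖g‖ + ‖z‖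
  have hsumgz : ∑ i, h i ^ 2 = euclNorm g ^ 2 + euclNorm z ^ 2 := by
    rw [enorm_sq', enorm_sq', ← Finset.sum_add_distrib]
    refine Finset.sum_congr rfl fun i _ => ?_
    by_cases hi : i ∈ Tk <;> simp [hg, hz, hi]
  have hnh : euclNorm h ≤ euclNorm g + euclNorm z := by
    rw [show euclNorm h = Real.sqrt (∑ i, h i ^ 2) from rfl, hsumgz]
    calc Real.sqrt (euclNorm g ^ 2 + euclNorm z ^ 2)
        ≤ Real.sqrt ((euclNorm g + euclNorm z) ^ 2) := Real.sqrt_le_sqrt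
          (by nlinarith [mul_nonneg (enorm_nonneg' g) (enorm_nonneg' z)])
      _ = euclNorm g + euclNorm z := Real.sqrt_sq
          (add_nonneg (enorm_nonneg' _) (enorm_nonneg' _))
  -- the target vector has the same norm as z
  have htv : euclNorm (fun i => if i ∈ (Ts ∪ Tk) \ Tk then xs i else 0) = euclNorm z := by
    show Real.sqrt _ = Real.sqrt _
    congr 1
    refine Finset.sum_congr rfl fun i _ => ?_
    show (if i ∈ (Ts ∪ Tk) \ Tk then xs i else 0) ^ 2 = z i ^ 2
    by_cases hi : i ∈ Tk
    · rw [if_neg (by simp [hi])]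
      simp [hz, hi]
    · by_cases hts : i ∈ Ts
      · rw [if_pos (Finset.mem_sdiff.mpr ⟨Finset.mem_union_left _ hts, hi⟩), hzi i hi]
        ring
      · rw [if_neg (by simp [hts, hi]), hzi i hi, hsupp i hts]
        simp
  -- conclusion
  rw [htv]
  have hmain : (1 - δ₂) * euclNorm h ≤ euclNorm z + Real.sqrt (1 + δ₁) * euclNorm et := by
    have h3 := mul_le_mul_of_nonneg_left hnh (le_of_lt h1δ)
    have h4 : (1 - δ₂) * (euclNorm g + euclNorm z) = (1 - δ₂) * euclNorm g + (1 - δ₂) * euclNorm z := by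
      ring
    have h5 : (1 - δ₂) * euclNorm z + δ₂ * euclNorm z = euclNorm z := by ring
    linarith
  have hrw : 1 / (1 - δ₂) * euclNorm z + Real.sqrt (1 + δ₁) / (1 - δ₂) * euclNorm et
      = (euclNorm z + Real.sqrt (1 + δ₁) * euclNorm et) / (1 - δ₂) := by ring
  rw [hrw, le_div_iff₀ h1δ]
  linarith
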